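/- Let A be a finite dimensional hereditary algebra. If T' → T is an arrow in the tilting quiver K(A) given by an exchange sequence 0 → X → E → Y → 0 with E ∈ add M (where T' = M ⊕ X, T = M ⊕ Y), and N is a projective-injective module over some algebra containing A-mod (specifically P̄ over A^{(1)}), then X → E remains a minimal left add(M ⊕ N)-approximation and E → Y remains a minimal right add(M ⊕ N)-approximation. -/

import Mathlib

open CategoryTheory

/-! Core definitions: short exact sequences, Ext¹-vanishing, projective dimension,
tilting modules, the tilting quiver, etc., over an arbitrary ring `Λ`.
Modules are objects of `ModuleCat.{0} Λ`. -/

universe u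

section Core

variable (Λ : Type) [Ring Λ]

/-- `0 → X → E → Y → 0` is short exact (via the maps `f`, `g`). -/
def IsSES {X E Y : ModuleCat.{0} Λ} (f : X →ₗ[Λ] E) (g : E →ₗ[Λ] Y) : Prop :=
  Function.Injective f ∧ Function.Surjective g ∧ LinearMap.range f = LinearMap.ker g

/-- `Ext¹_Λ(X, Y) = 0`, expressed by the splitting of every extension of `X` by `Y`. -/
def Ext1Zero (X Y : ModuleCat.{0} Λ) : Prop :=
  ∀ (E : ModuleCat.{0} Λ) (f : Y →ₗ[Λ] E) (g : E →ₗ[Λ] X),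
    IsSES Λ f g → ∃ s : X →ₗ[Λ] E, g ∘ₗ s = LinearMap.id

/-- Projective dimension at most `n`. -/
def pdLE : ℕ → ModuleCat.{0} Λ → Prop
  | 0, M => Module.Projective Λ M
  | n + 1, M => Module.Projective Λ M ∨
      ∃ P : ModuleCat.{0} Λ, Module.Projective Λ P ∧
        ∃ g : P →ₗ[Λ] M, Function.Surjective g ∧
          pdLE n (ModuleCat.of Λ (LinearMap.ker g))

/-- Global dimension at most `n`. -/
def gldimLE (n : ℕ) : Prop := ∀ M : ModuleCat.{0} Λ, pdLE Λ n M

/-- Isomorphism of modules. -/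
def IsoM (M N : ModuleCat.{0} Λ) : Prop := Nonempty (M ≃ₗ[Λ] N)

/-- `X` belongs to `add M`: it is a direct summand of a finite direct power of `M`. -/
def InAdd (M X : ModuleCat.{0} Λ) : Prop :=
  ∃ (m : ℕ) (s : X →ₗ[Λ] (Fin m → M)) (r : (Fin m → M) →ₗ[Λ] X),
    r ∘ₗ s = LinearMap.id

/-- An indecomposable module: nonzero, with no nontrivial idempotent endomorphism. -/
def Indec (M : ModuleCat.{0} Λ) : Prop :=
  Nontrivial M ∧ ∀ e : M →ₗ[Λ] M, e ∘ₗ e = e → e = 0 ∨ e = LinearMap.id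

/-- `δ(M) = n` : `M` decomposes as a direct sum of `n` pairwise non-isomorphic
indecomposable modules (in particular `M` is basic). -/
def DeltaEq (M : ModuleCat.{0} Λ) (n : ℕ) : Prop :=
  ∃ f : Fin n → ModuleCat.{0} Λ, (∀ i, Indec Λ (f i)) ∧
    (∀ i j, i ≠ j → ¬ IsoM Λ (f i) (f j)) ∧
    IsoM Λ M (ModuleCat.of Λ (∀ i, f i))

/-- A basic module: direct sum of pairwise non-isomorphic indecomposables. -/
def IsBasic (M : ModuleCat.{0} Λ) : Prop := ∃ n, DeltaEq Λ M n

/-- The regular module `Λ`. -/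
abbrev regMod : ModuleCat.{0} Λ := ModuleCat.of Λ Λ

/-- A tilting module: `pd T ≤ 1`, `Ext¹(T,T) = 0`, and there is an exact sequence
`0 → Λ → T₀ → T₁ → 0` with `T₀, T₁ ∈ add T`. -/
def IsTilting (T : ModuleCat.{0} Λ) : Prop :=
  pdLE Λ 1 T ∧ Ext1Zero Λ T T ∧
    ∃ T₀ T₁ : ModuleCat.{0} Λ, InAdd Λ T T₀ ∧ InAdd Λ T T₁ ∧
      ∃ (f : regMod Λ →ₗ[Λ] T₀) (g : T₀ →ₗ[Λ] T₁), IsSES Λ f g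

/-- Direct sum of two modules. -/
abbrev dsum (M N : ModuleCat.{0} Λ) : ModuleCat.{0} Λ := ModuleCat.of Λ (M × N)

/-- There is an arrow `T' → T` in the tilting quiver `𝒦(Λ)`: both are basic tilting
modules, `T' = M ⊕ X`, `T = M ⊕ Y` with `X`, `Y` indecomposable and non-isomorphic, and
there is a short exact sequence `0 → X → E → Y → 0` with `E ∈ add M`. -/
def TiltArrow (T' T : ModuleCat.{0} Λ) : Prop :=
  IsBasic Λ T' ∧ IsTilting Λ T' ∧ IsBasic Λ T ∧ IsTilting Λ T ∧
    ∃ M X Y : ModuleCat.{0} Λ, Indec Λ X ∧ Indec Λ Y ∧ ¬ IsoM Λ X Y ∧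
      IsoM Λ T' (dsum Λ M X) ∧ IsoM Λ T (dsum Λ M Y) ∧
      ∃ E : ModuleCat.{0} Λ, InAdd Λ M E ∧
        ∃ (f : X →ₗ[Λ] E) (g : E →ₗ[Λ] Y), IsSES Λ f g

/-- The vertex `T` of the tilting quiver has exactly `n` incident arrows
(counted up to isomorphism of the other endpoint, arrows in and out together). -/
def IncidentCount (n : ℕ) (T : ModuleCat.{0} Λ) : Prop :=
  ∃ f : Fin n → ModuleCat.{0} Λ,
    (∀ i, TiltArrow Λ (f i) T ∨ TiltArrow Λ T (f i)) ∧
    (∀ i j, i ≠ j → ¬ IsoM Λ (f i) (f j)) ∧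
    ∀ T'', (TiltArrow Λ T'' T ∨ TiltArrow Λ T T'') → ∃ i, IsoM Λ T'' (f i)

/-- `M` is generated by `T`. -/
def GenBy (T M : ModuleCat.{0} Λ) : Prop :=
  ∃ (m : ℕ) (g : (Fin m → T) →ₗ[Λ] M), Function.Surjective g

/-- There are exactly `s` basic tilting modules up to isomorphism. -/
def TiltingCountEq (s : ℕ) : Prop :=
  ∃ f : Fin s → ModuleCat.{0} Λ,
    (∀ i, IsBasic Λ (f i) ∧ IsTilting Λ (f i)) ∧
    (∀ i j, i ≠ j → ¬ IsoM Λ (f i) (f j)) ∧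
    ∀ T, IsBasic Λ T → IsTilting Λ T → ∃ i, IsoM Λ T (f i)

/-- The tilting quiver has exactly `t` arrows (up to isomorphism of endpoint pairs). -/
def ArrowCountEq (t : ℕ) : Prop :=
  ∃ g : Fin t → ModuleCat.{0} Λ × ModuleCat.{0} Λ,
    (∀ p, TiltArrow Λ (g p).1 (g p).2) ∧
    (∀ p q, p ≠ q → ¬ (IsoM Λ (g p).1 (g q).1 ∧ IsoM Λ (g p).2 (g q).2)) ∧
    ∀ T' T, TiltArrow Λ T' T → ∃ p, IsoM Λ T' (g p).1 ∧ IsoM Λ T (g p).2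

/-- `Λ` is representation-finite: finitely many finitely generated indecomposables
up to isomorphism. -/
def RepFinite : Prop :=
  ∃ (n : ℕ) (f : Fin n → ModuleCat.{0} Λ),
    ∀ M : ModuleCat.{0} Λ, Module.Finite Λ M → Indec Λ M → ∃ i, IsoM Λ M (f i)

/-- A maximal basic projective-injective module (direct sum of all the pairwise
non-isomorphic indecomposable projective-injective modules). -/
def IsProjInjSum (P : ModuleCat.{0} Λ) : Prop :=
  IsBasic Λ P ∧ Module.Projective Λ P ∧ Module.Injective Λ P ∧
    ∀ X : ModuleCat.{0} Λ, Indec Λ X → Module.Projective Λ X → Module.Injective Λ X →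
      InAdd Λ P X

/-- `f : X → E` is left almost split. -/
def IsLeftAlmostSplit {X E : ModuleCat.{0} Λ} (f : X →ₗ[Λ] E) : Prop :=
  (¬ ∃ r : E →ₗ[Λ] X, r ∘ₗ f = LinearMap.id) ∧
  ∀ (U : ModuleCat.{0} Λ) (u : X →ₗ[Λ] U), (¬ ∃ r : U →ₗ[Λ] X, r ∘ₗ u = LinearMap.id) →
    ∃ v : E →ₗ[Λ] U, v ∘ₗ f = u

/-- `g : E → Y` is right almost split. -/
def IsRightAlmostSplit {E Y : ModuleCat.{0} Λ} (g : E →ₗ[Λ] Y) : Prop :=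
  (¬ ∃ s : Y →ₗ[Λ] E, g ∘ₗ s = LinearMap.id) ∧
  ∀ (U : ModuleCat.{0} Λ) (u : U →ₗ[Λ] Y), (¬ ∃ s : Y →ₗ[Λ] U, u ∘ₗ s = LinearMap.id) →
    ∃ v : U →ₗ[Λ] E, g ∘ₗ v = u

/-- `0 → X → E → Y → 0` is an almost split (Auslander–Reiten) sequence. -/
def IsAlmostSplitSeq {X E Y : ModuleCat.{0} Λ} (f : X →ₗ[Λ] E) (g : E →ₗ[Λ] Y) : Prop :=
  IsSES Λ f g ∧ IsLeftAlmostSplit Λ f ∧ IsRightAlmostSplit Λ g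

/-- `N ≅ τ⁻¹ X`: there is an almost split sequence `0 → X → E → N → 0`. -/
def IsTauInv (X N : ModuleCat.{0} Λ) : Prop :=
  ∃ (E : ModuleCat.{0} Λ) (f : X →ₗ[Λ] E) (g : E →ₗ[Λ] N), IsAlmostSplitSeq Λ f g

/-- `f : X → E` is a minimal left `add M`-approximation. -/
def IsMinLeftApprox (M : ModuleCat.{0} Λ) {X E : ModuleCat.{0} Λ} (f : X →ₗ[Λ] E) : Prop :=
  InAdd Λ M E ∧
  (∀ (C : ModuleCat.{0} Λ), InAdd Λ M C → ∀ u : X →ₗ[Λ] C, ∃ v : E →ₗ[Λ] C, v ∘ₗ f = u) ∧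
  ∀ h : E →ₗ[Λ] E, h ∘ₗ f = f → Function.Bijective h

/-- `g : E → Y` is a minimal right `add M`-approximation. -/
def IsMinRightApprox (M : ModuleCat.{0} Λ) {E Y : ModuleCat.{0} Λ} (g : E →ₗ[Λ] Y) : Prop :=
  InAdd Λ M E ∧
  (∀ (C : ModuleCat.{0} Λ), InAdd Λ M C → ∀ u : C →ₗ[Λ] Y, ∃ v : C →ₗ[Λ] E, g ∘ₗ v = u) ∧
  ∀ h : E →ₗ[Λ] E, g ∘ₗ h = g → Function.Bijective h

end Core
/-! The duplicated algebra `A⁽¹⁾ = [[A,0],[DA,A]]`, realized as the trivial square-zero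
extension of `A × A` by the `(A × A)`-bimodule `D(A) = Hom_k(A,k)`, where the left action
is through the second factor and the right action through the first factor:
`[[a,0],[d,b]] · [[a',0],[d',b']] = [[aa',0],[d·a' + b·d', bb']]`. -/

section Dup

variable (k A : Type) [Field k] [Ring A] [Algebra k A]

noncomputable instance dualLeftModule : Module (A × A) (Module.Dual k A) where
  smul p f := f ∘ₗ LinearMap.mulRight k p.2
  one_smul f := by ext x; simp [HSMul.hSMul, SMul.smul]
  mul_smul p q f := by ext x; simp [HSMul.hSMul, SMul.smul, mul_assoc]
  smul_zero p := by ext x; simp [HSMul.hSMul, SMul.smul]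
  smul_add p f g := by ext x; simp [HSMul.hSMul, SMul.smul]
  add_smul p q f := by ext x; simp [HSMul.hSMul, SMul.smul, mul_add]
  zero_smul f := by ext x; simp [HSMul.hSMul, SMul.smul]

noncomputable instance dualRightModule : Module (A × A)ᵐᵒᵖ (Module.Dual k A) where
  smul p f := f ∘ₗ LinearMap.mulLeft k p.unop.1
  one_smul f := by ext x; simp [HSMul.hSMul, SMul.smul]
  mul_smul p q f := by ext x; simp [HSMul.hSMul, SMul.smul, mul_assoc]
  smul_zero p := by ext x; simp [HSMul.hSMul, SMul.smul]
  smul_add p f g := by ext x; simp [HSMul.hSMul, SMul.smul]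
  add_smul p q f := by ext x; simp [HSMul.hSMul, SMul.smul, add_mul]
  zero_smul f := by ext x; simp [HSMul.hSMul, SMul.smul]

instance dualSMulComm : SMulCommClass (A × A) (A × A)ᵐᵒᵖ (Module.Dual k A) where
  smul_comm p q f := by
    ext x
    show f (q.unop.1 * (x * p.2)) = f ((q.unop.1 * x) * p.2)
    rw [mul_assoc]

/-- The duplicated algebra `A⁽¹⁾`. -/
noncomputable abbrev DupAlg : Type := TrivSqZeroExt (A × A) (Module.Dual k A)

noncomputable instance : Ring (DupAlg k A) := inferInstanceAs (Ring (TrivSqZeroExt _ _))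

/-- The projection `A⁽¹⁾ → A` onto the first diagonal entry; restriction of scalars
along it is the canonical embedding of `A`-mod into `A⁽¹⁾`-mod. -/
noncomputable def dupProj : DupAlg k A →+* A where
  toFun x := x.fst.1
  map_one' := rfl
  map_mul' x y := by simp [TrivSqZeroExt.fst_mul]
  map_zero' := rfl
  map_add' x y := by simp [TrivSqZeroExt.fst_add]

/-- An `A`-module viewed as an `A⁽¹⁾`-module. -/
noncomputable abbrev resDup (M : ModuleCat.{0} A) : ModuleCat.{0} (DupAlg k A) :=
  (ModuleCat.restrictScalars (dupProj k A)).obj M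

end Dup

section Aux
variable (k A : Type) [Field k] [Ring A] [Algebra k A]

lemma dupProj_surj : Function.Surjective (dupProj k A) :=
  fun a => ⟨TrivSqZeroExt.inl (a, 0), rfl⟩

/-- Restriction of a linear map along `dupProj`. -/
noncomputable def resMap {M N : ModuleCat.{0} A} (φ : M →ₗ[A] N) :
    resDup k A M →ₗ[DupAlg k A] resDup k A N where
  toFun := φ
  map_add' := φ.map_add
  map_smul' c x := φ.map_smul (dupProj k A c) x

/-- A `DupAlg`-linear map between restricted modules is `A`-linear. -/
noncomputable def unresMap {M N : ModuleCat.{0} A}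
    (φ : resDup k A M →ₗ[DupAlg k A] resDup k A N) : M →ₗ[A] N where
  toFun := φ
  map_add' := φ.map_add
  map_smul' a x := by
    obtain ⟨c, rfl⟩ := dupProj_surj k A a
    exact φ.map_smul c x

lemma resMap_apply {M N : ModuleCat.{0} A} (φ : M →ₗ[A] N) (x : M) :
    resMap k A φ x = φ x := rfl

lemma unresMap_apply {M N : ModuleCat.{0} A}
    (φ : resDup k A M →ₗ[DupAlg k A] resDup k A N) (x : M) :
    unresMap k A φ x = φ x := rfl

example {M N : ModuleCat.{0} A} (φ : M →ₗ[A] N) (x : M) :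
    (((ModuleCat.restrictScalars (dupProj k A)).map (ModuleCat.ofHom φ)).hom :
      resDup k A M →ₗ[DupAlg k A] resDup k A N) x = φ x := rfl

end Aux

/-- If `T' = M ⊕ X → T = M ⊕ Y` is an arrow of `𝒦(A)` given by an
exchange sequence `0 → X → E → Y → 0` with `E ∈ add M`, `f` a minimal left
`add M`-approximation and `g` a minimal right `add M`-approximation, and `P̄` is the
projective-injective module over the duplicated algebra `A⁽¹⁾`, then `f` remains a minimal
left `add(M ⊕ P̄)`-approximation and `g` a minimal right `add(M ⊕ P̄)`-approximation in
`A⁽¹⁾`-mod. -/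
theorem approximations_unchanged_by_adding_proj_inj
    (k A : Type) [Field k] [Ring A] [Algebra k A] [FiniteDimensional k A]
    (hhered : gldimLE A 1)
    (M X E Y : ModuleCat.{0} A)
    (hX : Indec A X) (hY : Indec A Y)
    (hT' : IsTilting A (dsum A M X)) (hT : IsTilting A (dsum A M Y))
    (hE : InAdd A M E)
    (f : X →ₗ[A] E) (g : E →ₗ[A] Y) (hses : IsSES A f g)
    (hf : IsMinLeftApprox A M f) (hg : IsMinRightApprox A M g)
    (Pbar : ModuleCat.{0} (DupAlg k A)) (hP : IsProjInjSum (DupAlg k A) Pbar) :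
    IsMinLeftApprox (DupAlg k A) (dsum (DupAlg k A) (resDup k A M) Pbar)
      (((ModuleCat.restrictScalars (dupProj k A)).map (ModuleCat.ofHom f)).hom :
        resDup k A X →ₗ[DupAlg k A] resDup k A E) ∧
    IsMinRightApprox (DupAlg k A) (dsum (DupAlg k A) (resDup k A M) Pbar)
      (((ModuleCat.restrictScalars (dupProj k A)).map (ModuleCat.ofHom g)).hom :
        resDup k A E →ₗ[DupAlg k A] resDup k A Y) := by
  classical
  set Λ := DupAlg k A with hΛ
  set f' : resDup k A X →ₗ[Λ] resDup k A E :=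
    (((ModuleCat.restrictScalars (dupProj k A)).map (ModuleCat.ofHom f)).hom :
      resDup k A X →ₗ[Λ] resDup k A E) with hf'def
  set g' : resDup k A E →ₗ[Λ] resDup k A Y :=
    (((ModuleCat.restrictScalars (dupProj k A)).map (ModuleCat.ofHom g)).hom :
      resDup k A E →ₗ[Λ] resDup k A Y) with hg'def
  have hf'app : ∀ x, f' x = f x := fun _ => rfl
  have hg'app : ∀ x, g' x = g x := fun _ => rfl
  have finj : Function.Injective f' := hses.1
  have gsurj : Function.Surjective g' := hses.2.1
  have hMM : InAdd A M M :=
    ⟨1, LinearMap.pi fun _ => LinearMap.id, LinearMap.proj 0, rfl⟩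
  -- E ∈ add (M ⊕ Pbar) over Λ
  have hadd : InAdd Λ (dsum Λ (resDup k A M) Pbar) (resDup k A E) := by
    obtain ⟨m, s, r, hsr⟩ := hE
    have hsr' : ∀ x, r (s x) = x := fun x => DFunLike.congr_fun hsr x
    refine ⟨m,
      { toFun := fun x i => ((s x i : (resDup k A M)), (0 : Pbar))
        map_add' := fun x y => by
          funext i
          show ((s (x + y) i : (resDup k A M)), (0 : Pbar)) = _
          erw [map_add]
          exact Prod.ext rfl (add_zero (0 : Pbar)).symm
        map_smul' := fun c x => by
          funext i
          show ((s (dupProj k A c • x) i : (resDup k A M)), (0 : Pbar))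
            = (dupProj k A c • s x i, c • (0 : Pbar))
          erw [map_smul, smul_zero]
          rfl },
      { toFun := fun v => r fun i => (v i).1
        map_add' := fun v w => by
          have h0 : (fun i => ((v + w) i).1) = (fun i => (v i).1) + fun i => (w i).1 := rfl
          show r (fun i => ((v + w) i).1) = r (fun i => (v i).1) + r fun i => (w i).1
          erw [h0, map_add]
        map_smul' := fun c v => by
          have h0 : (fun i => ((c • v) i).1)
              = dupProj k A c • fun i => (v i).1 := rfl
          show r (fun i => ((c • v) i).1) = dupProj k A c • r fun i => (v i).1
          erw [h0, map_smul] }, ?_⟩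
    apply LinearMap.ext; intro x
    exact hsr' x
  refine ⟨⟨hadd, ?_, ?_⟩, ⟨hadd, ?_, ?_⟩⟩
  · -- left approximation property
    intro C hC u
    obtain ⟨n, sC, rC, hrc⟩ := hC
    have hrc' : ∀ y, rC (sC y) = y := fun y => DFunLike.congr_fun hrc y
    have h1 : ∀ i : Fin n, ∃ v1 : E →ₗ[A] M, v1 ∘ₗ f =
        unresMap k A ((LinearMap.fst Λ (resDup k A M) Pbar) ∘ₗ
          (LinearMap.proj i) ∘ₗ (sC ∘ₗ u)) :=
      fun i => hf.2.1 M hMM _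
    choose v1 hv1 using h1
    have h2 : ∀ i : Fin n, ∃ w : resDup k A E →ₗ[Λ] Pbar, ∀ x,
        w (f' x) = ((LinearMap.snd Λ (resDup k A M) Pbar) ∘ₗ
          (LinearMap.proj i) ∘ₗ (sC ∘ₗ u)) x :=
      fun i => hP.2.2.1.out f' finj _
    choose w hw using h2
    refine ⟨rC ∘ₗ LinearMap.pi (fun i => LinearMap.prod (resMap k A (v1 i)) (w i)), ?_⟩
    apply LinearMap.ext; intro x
    show rC (fun i => ((v1 i (f x) : (resDup k A M)), w i (f' x))) = u x
    have hkey : (fun i => ((v1 i (f x) : (resDup k A M)), w i (f' x))) = sC (u x) := by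
      funext i
      have e1 : v1 i (f x) = (sC (u x) i).1 := DFunLike.congr_fun (hv1 i) x
      have e2 : w i (f' x) = (sC (u x) i).2 := hw i x
      exact Prod.ext e1 e2
    erw [hkey, hrc']
  · -- left minimality
    intro h hh
    have hh' : (unresMap k A h) ∘ₗ f = f :=
      LinearMap.ext fun x => DFunLike.congr_fun hh x
    exact hf.2.2 _ hh'
  · -- right approximation property
    intro C hC u
    obtain ⟨n, sC, rC, hrc⟩ := hC
    have hrc' : ∀ y, rC (sC y) = y := fun y => DFunLike.congr_fun hrc y
    have h1 : ∀ i : Fin n, ∃ l1 : M →ₗ[A] E, g ∘ₗ l1 =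
        unresMap k A ((u ∘ₗ rC ∘ₗ LinearMap.single Λ (fun _ : Fin n => _) i) ∘ₗ
          LinearMap.inl Λ (resDup k A M) Pbar) :=
      fun i => hg.2.1 M hMM _
    choose l1 hl1 using h1
    haveI : Module.Projective Λ Pbar := hP.2.1
    have h2 : ∀ i : Fin n, ∃ l2 : Pbar →ₗ[Λ] resDup k A E, g' ∘ₗ l2 =
        (u ∘ₗ rC ∘ₗ LinearMap.single Λ (fun _ : Fin n => _) i) ∘ₗ
          LinearMap.inr Λ (resDup k A M) Pbar :=
      fun i => Module.projective_lifting_property g' _ gsurj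
    choose l2 hl2 using h2
    refine ⟨(∑ i : Fin n,
      (LinearMap.coprod (resMap k A (l1 i)) (l2 i)) ∘ₗ LinearMap.proj i) ∘ₗ sC, ?_⟩
    apply LinearMap.ext; intro c
    show g' ((∑ i : Fin n,
      (LinearMap.coprod (resMap k A (l1 i)) (l2 i)) ∘ₗ LinearMap.proj i) (sC c)) = u c
    rw [LinearMap.sum_apply, map_sum]
    have term : ∀ i : Fin n,
        g' (((LinearMap.coprod (resMap k A (l1 i)) (l2 i)) ∘ₗ LinearMap.proj i) (sC c))
          = u (rC (Pi.single i (sC c i))) := by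
      intro i
      show g' (resMap k A (l1 i) (sC c i).1 + l2 i (sC c i).2) = _
      rw [map_add]
      have e1 : g' (resMap k A (l1 i) (sC c i).1)
          = u (rC (Pi.single i ((sC c i).1, 0))) := by
        have := DFunLike.congr_fun (hl1 i) ((sC c i).1)
        exact this
      have e2 : g' (l2 i (sC c i).2) = u (rC (Pi.single i (0, (sC c i).2))) := by
        have := DFunLike.congr_fun (hl2 i) ((sC c i).2)
        exact this
      rw [e1, e2, ← map_add, ← map_add, ← Pi.single_add]
      have h0 : ((sC c i).1, (0 : Pbar)) + ((0 : resDup k A M), (sC c i).2)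
          = sC c i := Prod.ext (add_zero _) (zero_add _)
      rw [h0]
    have hsum : ∑ i : Fin n,
        g' (((LinearMap.coprod (resMap k A (l1 i)) (l2 i)) ∘ₗ LinearMap.proj i) (sC c))
        = ∑ i : Fin n, u (rC (Pi.single i (sC c i))) :=
      Finset.sum_congr rfl fun i _ => term i
    refine hsum.trans ?_
    rw [← map_sum, ← map_sum, Finset.univ_sum_single, hrc']
  · -- right minimality
    intro h hh
    have hh' : g ∘ₗ (unresMap k A h) = g :=
      LinearMap.ext fun x => DFunLike.congr_fun hh x
    exact hg.2.2 _ hh'
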